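/- For any complex n×n matrices X and Y: |det X − det Y| ≤ n · ‖X − Y‖_∞ · max(‖X‖_∞, ‖Y‖_∞)^{n−1}, where ‖·‖_∞ is the induced matrix infinity-norm (maximum absolute row sum). -/

import Mathlib

open Matrix

/-- The induced matrix infinity norm (maximum absolute row sum) for complex matrices. -/
noncomputable def cInfNorm {n : ℕ} (M : Matrix (Fin n) (Fin n) ℂ) : ℝ :=
  ⨆ i, ∑ j, ‖M i j‖

lemma rowsum_le_cInfNorm {n : ℕ} (M : Matrix (Fin n) (Fin n) ℂ) (i : Fin n) :
    ∑ j, ‖M i j‖ ≤ cInfNorm M := by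
  exact le_ciSup (f := fun i => ∑ j, ‖M i j‖) (Set.Finite.bddAbove (Set.finite_range _)) i

lemma cInfNorm_nonneg {n : ℕ} (M : Matrix (Fin n) (Fin n) ℂ) : 0 ≤ cInfNorm M :=
  Real.iSup_nonneg fun _ => Finset.sum_nonneg fun _ _ => norm_nonneg _

/-- Hadamard-type bound: |det A| ≤ product of row 1-norms. -/
lemma abs_det_le_prod_rowsum {n : ℕ} (A : Matrix (Fin n) (Fin n) ℂ) :
    ‖A.det‖ ≤ ∏ i, ∑ j, ‖A i j‖ := by
  rw [Matrix.det_apply']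
  have h1 : ‖∑ σ : Equiv.Perm (Fin n),
      (Equiv.Perm.sign σ : ℂ) * ∏ i, A (σ i) i‖ ≤
      ∑ σ : Equiv.Perm (Fin n), ∏ i, ‖A (σ i) i‖ := by
    refine le_trans (norm_sum_le _ _) (Finset.sum_le_sum fun σ _ => ?_)
    rw [norm_mul, norm_prod]
    rcases Int.units_eq_one_or (Equiv.Perm.sign σ) with h | h <;> simp [h]
  refine h1.trans ?_
  have h2 : ∀ σ : Equiv.Perm (Fin n),
      ∏ i, ‖A (σ i) i‖ = ∏ i, ‖A i (σ⁻¹ i)‖ := by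
    intro σ
    rw [← Equiv.prod_comp σ (fun i => ‖A i (σ⁻¹ i)‖)]
    simp
  simp_rw [h2]
  have h3 : ∑ σ : Equiv.Perm (Fin n), ∏ i, ‖A i (σ⁻¹ i)‖ =
      ∑ σ : Equiv.Perm (Fin n), ∏ i, ‖A i (σ i)‖ :=
    Fintype.sum_equiv (Equiv.inv (Equiv.Perm (Fin n))) _ _ (fun σ => rfl)
  rw [h3]
  have h4 : ∑ σ : Equiv.Perm (Fin n), ∏ i, ‖A i (σ i)‖ =
      ∑ f ∈ Finset.univ.image (fun σ : Equiv.Perm (Fin n) => (σ : Fin n → Fin n)),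
        ∏ i, ‖A i (f i)‖ := by
    rw [Finset.sum_image]
    intro a _ b _ h
    exact Equiv.coe_fn_injective h
  rw [h4, Finset.prod_univ_sum]
  refine Finset.sum_le_sum_of_subset_of_nonneg ?_ ?_
  · intro f _; simp [Fintype.mem_piFinset]
  · intro f _ _
    exact Finset.prod_nonneg fun _ _ => norm_nonneg _

theorem stmt17 {n : ℕ} (X Y : Matrix (Fin n) (Fin n) ℂ) :
    ‖X.det - Y.det‖ ≤
      (n : ℝ) * cInfNorm (X - Y) * (max (cInfNorm X) (cInfNorm Y)) ^ (n - 1) := by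
  rcases Nat.eq_zero_or_pos n with rfl | hn
  · simp [Matrix.det_fin_zero]
  set maxN := max (cInfNorm X) (cInfNorm Y) with hmaxN
  have hmaxnn : 0 ≤ maxN := le_trans (cInfNorm_nonneg X) (le_max_left _ _)
  set D := cInfNorm (X - Y) with hD
  have hDnn : 0 ≤ D := cInfNorm_nonneg _
  -- interpolating matrices
  set M : ℕ → Matrix (Fin n) (Fin n) ℂ :=
    fun k => Matrix.of (fun i j => if (i : ℕ) < k then Y i j else X i j) with hM
  have hM0 : M 0 = X := by ext i j; simp [hM]
  have hMn : M n = Y := by ext i j; simp [hM, i.isLt]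
  have tele : X.det - Y.det = ∑ k ∈ Finset.range n, ((M k).det - (M (k + 1)).det) := by
    rw [Finset.sum_range_sub' (fun k => (M k).det) n, hM0, hMn]
  rw [tele]
  refine le_trans (norm_sum_le _ _) ?_
  have bound : ∀ k ∈ Finset.range n,
      ‖(M k).det - (M (k + 1)).det‖ ≤ D * maxN ^ (n - 1) := by
    intro k hk
    have hkn : k < n := Finset.mem_range.mp hk
    set i₀ : Fin n := ⟨k, hkn⟩ with hi₀
    have hrow : ∀ i : Fin n, i ≠ i₀ → M k i = M (k + 1) i := by
      intro i hi
      have hik : (i : ℕ) ≠ k := fun h => hi (Fin.ext h)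
      have : ((i : ℕ) < k) = ((i : ℕ) < k + 1) := by
        simp only [eq_iff_iff, Nat.lt_succ_iff]
        omega
      ext j
      simp [hM, this]
    have hMk : M k = Matrix.updateRow (M (k + 1)) i₀ (X i₀) := by
      ext i j
      by_cases hi : i = i₀
      · subst hi
        simp [hM, hi₀, Matrix.updateRow_self]
      · rw [Matrix.updateRow_ne hi, ← hrow i hi]
    have hMk1 : M (k + 1) = Matrix.updateRow (M (k + 1)) i₀ (Y i₀) := by
      ext i j
      by_cases hi : i = i₀
      · subst hi
        simp [hM, hi₀, Matrix.updateRow_self]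
      · rw [Matrix.updateRow_ne hi]
    have hself : M (k + 1) i₀ = Y i₀ := by
      ext j
      simp [hM, hi₀]
    have hY : (M (k + 1)).updateRow i₀ (Y i₀) = M (k + 1) := by
      rw [← hself]; exact Matrix.updateRow_eq_self _ _
    have hdiff : (M k).det - (M (k + 1)).det =
        (Matrix.updateRow (M (k + 1)) i₀ (X i₀ - Y i₀)).det := by
      have h := Matrix.det_updateRow_add (M (k + 1)) i₀ (X i₀ - Y i₀) (Y i₀)
      rw [sub_add_cancel] at h
      rw [hMk, h, hY]
      ring
    rw [hdiff]
    set Z := Matrix.updateRow (M (k + 1)) i₀ (X i₀ - Y i₀) with hZ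
    refine le_trans (abs_det_le_prod_rowsum Z) ?_
    set r : Fin n → ℝ := fun i => ∑ j, ‖Z i j‖ with hr
    have hrnn : ∀ i, 0 ≤ r i := fun i => Finset.sum_nonneg fun _ _ => norm_nonneg _
    have hprod : ∏ i, r i = r i₀ * ∏ i ∈ Finset.univ.erase i₀, r i :=
      (Finset.mul_prod_erase Finset.univ r (Finset.mem_univ i₀)).symm
    have hri₀ : r i₀ ≤ D := by
      have : r i₀ = ∑ j, ‖(X - Y) i₀ j‖ := by
        simp [hr, hZ, Matrix.sub_apply]
      rw [this, hD]
      exact rowsum_le_cInfNorm _ _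
    have hrest : ∀ i ∈ Finset.univ.erase i₀, r i ≤ maxN := by
      intro i hi
      have hi' : i ≠ i₀ := (Finset.mem_erase.mp hi).1
      have hZi : Z i = M (k + 1) i := Matrix.updateRow_ne hi'
      by_cases hik : (i : ℕ) < k + 1
      · have : r i = ∑ j, ‖Y i j‖ := by
          simp [hr, hZi, hM, hik]
        rw [this]
        exact le_trans (rowsum_le_cInfNorm Y i) (le_max_right _ _)
      · have : r i = ∑ j, ‖X i j‖ := by
          simp [hr, hZi, hM, hik]
        rw [this]
        exact le_trans (rowsum_le_cInfNorm X i) (le_max_left _ _)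
    have hcard : (Finset.univ.erase i₀).card = n - 1 := by
      rw [Finset.card_erase_of_mem (Finset.mem_univ i₀), Finset.card_univ, Fintype.card_fin]
    calc ∏ i, r i = r i₀ * ∏ i ∈ Finset.univ.erase i₀, r i := hprod
      _ ≤ D * maxN ^ (n - 1) := by
          refine mul_le_mul hri₀ ?_ (Finset.prod_nonneg fun i _ => hrnn i) hDnn
          calc ∏ i ∈ Finset.univ.erase i₀, r i
              ≤ ∏ _i ∈ Finset.univ.erase i₀, maxN :=
                Finset.prod_le_prod (fun i _ => hrnn i) hrest
            _ = maxN ^ (n - 1) := by rw [Finset.prod_const, hcard]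
  calc ∑ k ∈ Finset.range n, ‖(M k).det - (M (k + 1)).det‖
      ≤ ∑ _k ∈ Finset.range n, D * maxN ^ (n - 1) := Finset.sum_le_sum bound
    _ = (n : ℝ) * D * maxN ^ (n - 1) := by
        rw [Finset.sum_const, Finset.card_range, nsmul_eq_mul, mul_assoc]
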